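/- (Single-step version of Theorem 1.) Let λ > 0, let Φ₁ be a real s₁ × d matrix with label matrix Y₁ of size s₁ × c₁, and let Φ₂ be a real s₂ × d matrix with label matrix Y₂ of size s₂ × c₂. Set M₁ = (Φ₁ᵀΦ₁ + λ·I_d)⁻¹, W₁ = M₁Φ₁ᵀY₁, and M = M₁ − M₁Φ₂ᵀ(I_{s₂} + Φ₂M₁Φ₂ᵀ)⁻¹Φ₂M₁. Then the recursively updated parameter W = [W₁ − MΦ₂ᵀΦ₂W₁ | MΦ₂ᵀY₂] (horizontal concatenation) is the unique minimizer over W' ∈ ℝ^{d×(c₁+c₂)} of the joint ridge objective ‖Y − ΦW'‖_F² + λ‖W'‖_F², where Φ is the vertical stack of Φ₁ on top of Φ₂ and Y is the block-diagonal matrix with blocks Y₁ and Y₂. -/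

import Mathlib

open Matrix

/-- The ridge regression objective `J(W) = ‖Y − Φ W‖_F² + λ‖W‖_F²`. -/
noncomputable def ridgeObj {s d c : Type} [Fintype s] [Fintype d] [Fintype c]
    (lam : ℝ) (Φ : Matrix s d ℝ) (Y : Matrix s c ℝ) (W : Matrix d c ℝ) : ℝ :=
  (∑ i, ∑ j, (Y - Φ * W) i j ^ 2) + lam * ∑ i, ∑ j, W i j ^ 2

lemma sumSq_eq_trace {s c : Type} [Fintype s] [Fintype c] (X : Matrix s c ℝ) :
    (∑ i, ∑ j, X i j ^ 2) = trace (Xᵀ * X) := by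
  rw [Finset.sum_comm]
  simp [Matrix.trace, Matrix.diag, Matrix.mul_apply, sq]

lemma sumSq_nonneg {s c : Type} [Fintype s] [Fintype c] (X : Matrix s c ℝ) :
    0 ≤ ∑ i, ∑ j, X i j ^ 2 := by positivity

lemma sumSq_pos {s c : Type} [Fintype s] [Fintype c] {X : Matrix s c ℝ} (h : X ≠ 0) :
    0 < ∑ i, ∑ j, X i j ^ 2 := by
  rcases (sumSq_nonneg X).lt_or_eq with h' | h'
  · exact h'
  · exfalso
    apply h
    ext i j
    have h1 : ∀ i ∈ Finset.univ, (∑ j, X i j ^ 2) = 0 :=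
      (Finset.sum_eq_zero_iff_of_nonneg (fun i _ => by positivity)).mp h'.symm
    have h2 : ∀ j ∈ Finset.univ, X i j ^ 2 = 0 :=
      (Finset.sum_eq_zero_iff_of_nonneg (fun j _ => by positivity)).mp (h1 i (Finset.mem_univ i))
    simpa using pow_eq_zero_iff (n := 2) (by norm_num) |>.mp (h2 j (Finset.mem_univ j))

lemma trace_tsym {m n : Type} [Fintype m] [Fintype n] (A B : Matrix m n ℝ) :
    trace (Aᵀ * B) = trace (Bᵀ * A) := by
  rw [← Matrix.trace_transpose (Aᵀ * B)]
  simp [Matrix.transpose_mul]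

lemma ridge_min {s d c : Type} [Fintype s] [Fintype d] [Fintype c] [DecidableEq d]
    (lam : ℝ) (hlam : 0 < lam) (Φ : Matrix s d ℝ) (Y : Matrix s c ℝ)
    (W : Matrix d c ℝ)
    (hnorm : (Φᵀ * Φ + lam • (1 : Matrix d d ℝ)) * W = Φᵀ * Y) (W' : Matrix d c ℝ) :
    ridgeObj lam Φ Y W ≤ ridgeObj lam Φ Y W' ∧
      (W' ≠ W → ridgeObj lam Φ Y W < ridgeObj lam Φ Y W') := by
  set D := W' - W with hD
  have hW' : W' = W + D := by simp [hD]
  have hz : Φᵀ * (Φ * W) + lam • W - Φᵀ * Y = 0 := by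
    rw [← hnorm]
    simp [Matrix.add_mul, Matrix.smul_mul, Matrix.mul_assoc]
  have h0 : trace (Dᵀ * (Φᵀ * (Φ * W))) + lam * trace (Dᵀ * W) - trace (Dᵀ * (Φᵀ * Y)) = 0 := by
    have := congrArg (fun Z => trace (Dᵀ * Z)) hz
    simpa [Matrix.mul_add, Matrix.mul_sub, Matrix.mul_smul, Matrix.trace_add,
      Matrix.trace_sub, Matrix.trace_smul] using this
  have key : ridgeObj lam Φ Y W' =
      ridgeObj lam Φ Y W + ((∑ i, ∑ j, (Φ * D) i j ^ 2) + lam * ∑ i, ∑ j, D i j ^ 2) := by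
    have eY : Y - Φ * W' = (Y - Φ * W) - Φ * D := by
      rw [hW', Matrix.mul_add]
      abel
    simp only [ridgeObj, sumSq_eq_trace, eY, hW']
    simp only [Matrix.transpose_sub, Matrix.transpose_add, Matrix.sub_mul, Matrix.add_mul,
      Matrix.mul_sub, Matrix.mul_add, Matrix.trace_sub, Matrix.trace_add,
      Matrix.transpose_mul, Matrix.mul_assoc]
    have t1 : trace (Yᵀ * (Φ * D)) = trace (Dᵀ * (Φᵀ * Y)) := by
      rw [trace_tsym]; simp [Matrix.transpose_mul, Matrix.mul_assoc]
    have t2 : trace (Wᵀ * (Φᵀ * (Φ * D))) = trace (Dᵀ * (Φᵀ * (Φ * W))) := by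
      rw [← Matrix.mul_assoc Φᵀ Φ D, ← Matrix.mul_assoc Wᵀ, trace_tsym]
      simp [Matrix.transpose_mul, Matrix.mul_assoc]
    have t3 : trace (Wᵀ * D) = trace (Dᵀ * W) := trace_tsym W D
    have t3l : lam * trace (Wᵀ * D) = lam * trace (Dᵀ * W) := by rw [t3]
    linarith
  constructor
  · rw [key]
    have := sumSq_nonneg (Φ * D)
    have := sumSq_nonneg D
    nlinarith
  · intro hne
    rw [key]
    have hDne : D ≠ 0 := by
      intro h0'
      apply hne
      rw [hW', h0', add_zero]
    have := sumSq_pos hDne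
    have := sumSq_nonneg (Φ * D)
    nlinarith


/-- Single-step version of Theorem 1: with `M₁ = (Φ₁ᵀΦ₁ + λI)⁻¹`, `W₁ = M₁Φ₁ᵀY₁` and
`M = M₁ − M₁Φ₂ᵀ(I + Φ₂M₁Φ₂ᵀ)⁻¹Φ₂M₁`, the recursively updated parameter
`W = [W₁ − MΦ₂ᵀΦ₂W₁ | MΦ₂ᵀY₂]` is the unique minimizer of the joint ridge objective
on the stacked data `Φ = [Φ₁; Φ₂]`, `Y = blockdiag(Y₁, Y₂)`. -/
theorem recursive_ridge_update_is_unique_joint_minimizer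
    (lam : ℝ) (hlam : 0 < lam) (s₁ s₂ d c₁ c₂ : ℕ)
    (Φ₁ : Matrix (Fin s₁) (Fin d) ℝ) (Y₁ : Matrix (Fin s₁) (Fin c₁) ℝ)
    (Φ₂ : Matrix (Fin s₂) (Fin d) ℝ) (Y₂ : Matrix (Fin s₂) (Fin c₂) ℝ)
    (M₁ : Matrix (Fin d) (Fin d) ℝ)
    (hM₁ : M₁ = (Φ₁ᵀ * Φ₁ + lam • (1 : Matrix (Fin d) (Fin d) ℝ))⁻¹)
    (W₁ : Matrix (Fin d) (Fin c₁) ℝ)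
    (hW₁ : W₁ = M₁ * Φ₁ᵀ * Y₁)
    (M : Matrix (Fin d) (Fin d) ℝ)
    (hM : M = M₁ - M₁ * Φ₂ᵀ *
      ((1 : Matrix (Fin s₂) (Fin s₂) ℝ) + Φ₂ * M₁ * Φ₂ᵀ)⁻¹ * Φ₂ * M₁)
    (W : Matrix (Fin d) (Fin c₁ ⊕ Fin c₂) ℝ)
    (hW : W = Matrix.fromCols (W₁ - M * Φ₂ᵀ * Φ₂ * W₁) (M * Φ₂ᵀ * Y₂)) :
    (∀ W' : Matrix (Fin d) (Fin c₁ ⊕ Fin c₂) ℝ,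
      ridgeObj lam (Matrix.fromRows Φ₁ Φ₂) (Matrix.fromBlocks Y₁ 0 0 Y₂) W ≤
        ridgeObj lam (Matrix.fromRows Φ₁ Φ₂) (Matrix.fromBlocks Y₁ 0 0 Y₂) W') ∧
    (∀ W' : Matrix (Fin d) (Fin c₁ ⊕ Fin c₂) ℝ, W' ≠ W →
      ridgeObj lam (Matrix.fromRows Φ₁ Φ₂) (Matrix.fromBlocks Y₁ 0 0 Y₂) W <
        ridgeObj lam (Matrix.fromRows Φ₁ Φ₂) (Matrix.fromBlocks Y₁ 0 0 Y₂) W') := by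
  set A := Φ₁ᵀ * Φ₁ + lam • (1 : Matrix (Fin d) (Fin d) ℝ) with hA
  set S := (1 : Matrix (Fin s₂) (Fin s₂) ℝ) + Φ₂ * M₁ * Φ₂ᵀ with hS
  -- positive definiteness facts
  have hA₁pd : A.PosDef := by
    have h1 : (Φ₁ᵀ * Φ₁).PosSemidef := by
      have := Matrix.posSemidef_conjTranspose_mul_self Φ₁
      rwa [Matrix.conjTranspose_eq_transpose_of_trivial] at this
    have h2 : (lam • (1 : Matrix (Fin d) (Fin d) ℝ)).PosDef := by
      rw [Matrix.smul_one_eq_diagonal]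
      exact Matrix.PosDef.diagonal (fun _ => hlam)
    exact Matrix.PosDef.posSemidef_add h1 h2
  have hAM₁ : A * M₁ = 1 := by
    rw [hM₁]
    exact Matrix.mul_nonsing_inv _ hA₁pd.det_pos.ne'.isUnit
  have hM₁pd : M₁.PosDef := by rw [hM₁]; exact hA₁pd.inv
  have hSpd : S.PosDef := by
    have h1 : (Φ₂ * M₁ * Φ₂ᵀ).PosSemidef := by
      have := hM₁pd.posSemidef.mul_mul_conjTranspose_same Φ₂
      rwa [Matrix.conjTranspose_eq_transpose_of_trivial] at this
    exact Matrix.PosDef.add_posSemidef Matrix.PosDef.one h1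
  have hSinv : S * S⁻¹ = 1 := Matrix.mul_nonsing_inv _ hSpd.det_pos.ne'.isUnit
  -- Woodbury-style identity: (A + Φ₂ᵀΦ₂) M = 1
  have h2 : Φ₂ * M₁ * Φ₂ᵀ * S⁻¹ = 1 - S⁻¹ := by
    have h1 : Φ₂ * M₁ * Φ₂ᵀ = S - 1 := by rw [hS]; abel
    rw [h1, Matrix.sub_mul, hSinv, Matrix.one_mul]
  have hAM : (A + Φ₂ᵀ * Φ₂) * M = 1 := by
    have e1 : A * (M₁ * Φ₂ᵀ * S⁻¹ * Φ₂ * M₁) = Φ₂ᵀ * S⁻¹ * Φ₂ * M₁ := by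
      calc A * (M₁ * Φ₂ᵀ * S⁻¹ * Φ₂ * M₁)
          = A * M₁ * Φ₂ᵀ * S⁻¹ * Φ₂ * M₁ := by simp only [Matrix.mul_assoc]
        _ = Φ₂ᵀ * S⁻¹ * Φ₂ * M₁ := by rw [hAM₁, Matrix.one_mul]
    have e2 : Φ₂ᵀ * Φ₂ * (M₁ * Φ₂ᵀ * S⁻¹ * Φ₂ * M₁) =
        Φ₂ᵀ * Φ₂ * M₁ - Φ₂ᵀ * S⁻¹ * Φ₂ * M₁ := by
      calc Φ₂ᵀ * Φ₂ * (M₁ * Φ₂ᵀ * S⁻¹ * Φ₂ * M₁)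
          = Φ₂ᵀ * (Φ₂ * M₁ * Φ₂ᵀ * S⁻¹) * (Φ₂ * M₁) := by simp only [Matrix.mul_assoc]
        _ = Φ₂ᵀ * (1 - S⁻¹) * (Φ₂ * M₁) := by rw [h2]
        _ = Φ₂ᵀ * Φ₂ * M₁ - Φ₂ᵀ * S⁻¹ * Φ₂ * M₁ := by
            simp only [Matrix.mul_sub, Matrix.sub_mul, Matrix.mul_one, Matrix.mul_assoc]
    rw [hM, Matrix.mul_sub]
    simp only [Matrix.add_mul]
    rw [hAM₁, e1, e2]
    abel
  -- normal equation components
  have hC₂ : (A + Φ₂ᵀ * Φ₂) * (M * Φ₂ᵀ * Y₂) = Φ₂ᵀ * Y₂ := by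
    calc (A + Φ₂ᵀ * Φ₂) * (M * Φ₂ᵀ * Y₂)
        = (A + Φ₂ᵀ * Φ₂) * M * (Φ₂ᵀ * Y₂) := by simp only [Matrix.mul_assoc]
      _ = Φ₂ᵀ * Y₂ := by rw [hAM, Matrix.one_mul]
  have hA₁W₁ : A * W₁ = Φ₁ᵀ * Y₁ := by
    rw [hW₁]
    calc A * (M₁ * Φ₁ᵀ * Y₁) = A * M₁ * (Φ₁ᵀ * Y₁) := by simp only [Matrix.mul_assoc]
      _ = Φ₁ᵀ * Y₁ := by rw [hAM₁, Matrix.one_mul]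
  have hC₁ : (A + Φ₂ᵀ * Φ₂) * (W₁ - M * Φ₂ᵀ * Φ₂ * W₁) = Φ₁ᵀ * Y₁ := by
    have e3 : (A + Φ₂ᵀ * Φ₂) * (M * Φ₂ᵀ * Φ₂ * W₁) = Φ₂ᵀ * Φ₂ * W₁ := by
      calc (A + Φ₂ᵀ * Φ₂) * (M * Φ₂ᵀ * Φ₂ * W₁)
          = (A + Φ₂ᵀ * Φ₂) * M * (Φ₂ᵀ * Φ₂ * W₁) := by simp only [Matrix.mul_assoc]
        _ = Φ₂ᵀ * Φ₂ * W₁ := by rw [hAM, Matrix.one_mul]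
    rw [Matrix.mul_sub, e3, Matrix.add_mul, hA₁W₁]
    abel
  -- the stacked normal equation
  have hΦTΦ : (Matrix.fromRows Φ₁ Φ₂)ᵀ * Matrix.fromRows Φ₁ Φ₂ = Φ₁ᵀ * Φ₁ + Φ₂ᵀ * Φ₂ := by
    rw [Matrix.transpose_fromRows, Matrix.fromCols_mul_fromRows]
  have hΦTY : (Matrix.fromRows Φ₁ Φ₂)ᵀ * Matrix.fromBlocks Y₁ 0 0 Y₂ =
      Matrix.fromCols (Φ₁ᵀ * Y₁) (Φ₂ᵀ * Y₂) := by
    rw [Matrix.transpose_fromRows, Matrix.fromCols_mul_fromBlocks]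
    simp
  have hnorm : ((Matrix.fromRows Φ₁ Φ₂)ᵀ * Matrix.fromRows Φ₁ Φ₂ +
      lam • (1 : Matrix (Fin d) (Fin d) ℝ)) * W =
      (Matrix.fromRows Φ₁ Φ₂)ᵀ * Matrix.fromBlocks Y₁ 0 0 Y₂ := by
    rw [hΦTΦ, hΦTY, hW]
    have hre : Φ₁ᵀ * Φ₁ + Φ₂ᵀ * Φ₂ + lam • (1 : Matrix (Fin d) (Fin d) ℝ) = A + Φ₂ᵀ * Φ₂ := by
      rw [hA]; abel
    rw [hre, Matrix.mul_fromCols, hC₁, hC₂]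
  exact ⟨fun W' => (ridge_min lam hlam _ _ W hnorm W').1,
    fun W' h => (ridge_min lam hlam _ _ W hnorm W').2 h⟩
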